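/- Let χ be a Dirichlet character modulo Q and let s = σ + it with σ > 1. Then |L(s, χ)| ≥ ζ(2σ)/ζ(σ); equivalently, log|L(s, χ)| ≥ log ζ(2σ) − log ζ(σ). -/

import Mathlib

open Complex

private lemma prime_two_le (p : Nat.Primes) : (2:ℝ) ≤ (p:ℝ) := by
  exact_mod_cast p.prop.two_le

private lemma rpow_term_lt_one (p : Nat.Primes) {u : ℝ} (hu : 0 < u) :
    (p:ℝ) ^ (-u) < 1 :=
  Real.rpow_lt_one_of_one_lt_of_neg (by linarith [prime_two_le p]) (by linarith)

private lemma rpow_term_pos (p : Nat.Primes) (u : ℝ) : 0 < (p:ℝ) ^ (-u) :=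
  Real.rpow_pos_of_pos (by linarith [prime_two_le p]) _

private lemma summable_rpow_primes {u : ℝ} (hu : 1 < u) :
    Summable fun p : Nat.Primes ↦ (p:ℝ) ^ (-u) :=
  Nat.Primes.summable_rpow.mpr (by linarith)

private lemma key_term (p : Nat.Primes) {u : ℝ} (hu : 0 < u) :
    -Complex.log (1 - (p:ℂ) ^ (-(u:ℂ))) = ((-Real.log (1 - (p:ℝ) ^ (-u)) : ℝ) : ℂ) := by
  have hp0 : (0:ℝ) ≤ (p:ℝ) := by linarith [prime_two_le p]
  have h1 : ((p:ℂ) : ℂ) ^ (-(u:ℂ)) = (((p:ℝ) ^ (-u) : ℝ) : ℂ) := by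
    rw [Complex.ofReal_cpow hp0]
    push_cast
    ring_nf
  have h2 : (0:ℝ) < 1 - (p:ℝ) ^ (-u) := by linarith [rpow_term_lt_one p hu]
  rw [h1, ← Complex.ofReal_one, ← Complex.ofReal_sub, ← Complex.ofReal_log h2.le,
    ← Complex.ofReal_neg]

private lemma zeta_re_eq {u : ℝ} (hu : 1 < u) :
    (riemannZeta ((u:ℝ) : ℂ)).re
      = Real.exp (∑' p : Nat.Primes, -Real.log (1 - (p:ℝ) ^ (-u))) := by
  have hre : 1 < ((u:ℝ):ℂ).re := by simpa using hu
  have h := riemannZeta_eulerProduct_exp_log hre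
  rw [← h]
  rw [tsum_congr fun p ↦ key_term p (by linarith : (0:ℝ) < u)]
  rw [← Complex.ofReal_tsum, ← Complex.ofReal_exp, Complex.ofReal_re]

theorem stmt_9 {Q : ℕ} [NeZero Q] (χ : DirichletCharacter ℂ Q) (σ t : ℝ) (hσ : 1 < σ) :
    (riemannZeta ((2 * σ : ℝ) : ℂ)).re / (riemannZeta ((σ : ℝ) : ℂ)).re ≤
      ‖DirichletCharacter.LFunction χ ((σ : ℂ) + t * Complex.I)‖ := by
  set s : ℂ := (σ : ℂ) + t * Complex.I with hs_def
  have hs : 1 < s.re := by simp [hs_def, hσ]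
  have hσ0 : (0:ℝ) < σ := by linarith
  -- summability facts
  have hsumσ := summable_rpow_primes hσ
  have hsum2σ := summable_rpow_primes (by linarith : (1:ℝ) < 2 * σ)
  have habs_le : ∀ p : Nat.Primes, ‖χ p * (p:ℂ) ^ (-s)‖ ≤ (p:ℝ) ^ (-σ) := by
    intro p
    have hp0 : (0:ℝ) < (p:ℝ) := by linarith [prime_two_le p]
    rw [norm_mul]
    have h1 : ‖(p:ℂ) ^ (-s)‖ = (p:ℝ) ^ (-σ) := by
      rw [show ((p:ℕ):ℂ) = (((p:ℕ):ℝ):ℂ) by push_cast; ring,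
        Complex.norm_cpow_eq_rpow_re_of_pos hp0]
      congr 1
      simp [hs_def]
    rw [h1]
    calc ‖χ p‖ * (p:ℝ) ^ (-σ) ≤ 1 * (p:ℝ) ^ (-σ) := by
          exact mul_le_mul_of_nonneg_right (χ.norm_le_one _) (rpow_term_pos p σ).le
      _ = (p:ℝ) ^ (-σ) := one_mul _
  have hsumχ : Summable fun p : Nat.Primes ↦ χ p * (p:ℂ) ^ (-s) :=
    Summable.of_norm <| hsumσ.of_nonneg_of_le (fun _ ↦ norm_nonneg _) habs_le
  have hT : Summable fun p : Nat.Primes ↦ -Complex.log (1 - χ p * (p:ℂ) ^ (-s)) :=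
    hsumχ.clog_one_sub.neg
  -- the L-function as an exponential
  have hL : DirichletCharacter.LFunction χ s
      = Complex.exp (∑' p : Nat.Primes, -Complex.log (1 - χ p * (p:ℂ) ^ (-s))) := by
    rw [DirichletCharacter.LFunction_eq_LSeries χ hs]
    exact (DirichletCharacter.LSeries_eulerProduct_exp_log χ hs).symm
  have habsL : ‖DirichletCharacter.LFunction χ s‖
      = Real.exp (∑' p : Nat.Primes, -Real.log (‖1 - χ p * (p:ℂ) ^ (-s)‖)) := by
    rw [hL, Complex.norm_exp, Complex.re_tsum hT]
    congr 1
    refine tsum_congr fun p ↦ ?_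
    rw [Complex.neg_re, Complex.log_re]
  -- zeta values
  rw [zeta_re_eq (by linarith : (1:ℝ) < 2 * σ), zeta_re_eq hσ, habsL, ← Real.exp_sub]
  rw [Real.exp_le_exp]
  -- summability of real parts
  have hb : Summable fun p : Nat.Primes ↦ -Real.log (1 - (p:ℝ) ^ (-σ)) := by
    have := Complex.summable_ofReal.2 hsumσ
    have h := this.clog_one_sub.neg
    have := (Complex.hasSum_re h.hasSum).summable
    refine this.congr fun p ↦ ?_
    have h2 : (0:ℝ) < 1 - (p:ℝ) ^ (-σ) := by linarith [rpow_term_lt_one p hσ0]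
    rw [show (1 - ((((p:ℝ) ^ (-σ) : ℝ)) : ℂ)) = ((1 - (p:ℝ) ^ (-σ) : ℝ) : ℂ) by push_cast; ring,
      ← Complex.ofReal_log h2.le, ← Complex.ofReal_neg, Complex.ofReal_re]
  have ha : Summable fun p : Nat.Primes ↦ -Real.log (1 - (p:ℝ) ^ (-(2*σ))) := by
    have := Complex.summable_ofReal.2 hsum2σ
    have h := this.clog_one_sub.neg
    have := (Complex.hasSum_re h.hasSum).summable
    refine this.congr fun p ↦ ?_
    have h2 : (0:ℝ) < 1 - (p:ℝ) ^ (-(2*σ)) := by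
      linarith [rpow_term_lt_one p (by linarith : (0:ℝ) < 2*σ)]
    rw [show (1 - ((((p:ℝ) ^ (-(2*σ)) : ℝ)) : ℂ)) = ((1 - (p:ℝ) ^ (-(2*σ)) : ℝ) : ℂ) by
        push_cast; ring,
      ← Complex.ofReal_log h2.le, ← Complex.ofReal_neg, Complex.ofReal_re]
  have hc : Summable fun p : Nat.Primes ↦ -Real.log (‖1 - χ p * (p:ℂ) ^ (-s)‖) := by
    have := (Complex.hasSum_re hT.hasSum).summable
    refine this.congr fun p ↦ ?_
    rw [Complex.neg_re, Complex.log_re]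
  rw [← Summable.tsum_sub ha hb]
  refine Summable.tsum_le_tsum (fun p ↦ ?_) (ha.sub hb) hc
  -- termwise inequality
  set x : ℝ := (p:ℝ) ^ (-σ) with hx_def
  have hx0 : 0 < x := rpow_term_pos p σ
  have hx1 : x < 1 := rpow_term_lt_one p hσ0
  have hsq : (p:ℝ) ^ (-(2*σ)) = x ^ 2 := by
    rw [hx_def, ← Real.rpow_natCast ((p:ℝ) ^ (-σ)) 2,
      ← Real.rpow_mul (by linarith [prime_two_le p] : (0:ℝ) ≤ (p:ℝ))]
    norm_num
    ring_nf
  have h1x2 : (0:ℝ) < 1 - x ^ 2 := by nlinarith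
  have hzabs : ‖χ p * (p:ℂ) ^ (-s)‖ ≤ x := habs_le p
  have hwl : 1 - x ≤ ‖1 - χ p * (p:ℂ) ^ (-s)‖ := by
    have := norm_sub_norm_le (1:ℂ) (χ p * (p:ℂ) ^ (-s))
    simp only [norm_one] at this
    linarith
  have hwu : ‖1 - χ p * (p:ℂ) ^ (-s)‖ ≤ 1 + x := by
    have := norm_sub_le (1:ℂ) (χ p * (p:ℂ) ^ (-s))
    simp only [norm_one] at this
    linarith
  have hwpos : 0 < ‖1 - χ p * (p:ℂ) ^ (-s)‖ := by linarith
  have hLHS : -Real.log (1 - (p:ℝ) ^ (-(2*σ))) - -Real.log (1 - x)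
      = -Real.log (1 + x) := by
    rw [hsq]
    have hfac : (1:ℝ) - x ^ 2 = (1 - x) * (1 + x) := by ring
    rw [hfac, Real.log_mul (by linarith) (by linarith)]
    ring
  rw [hLHS, neg_le_neg_iff]
  exact Real.log_le_log hwpos hwu
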